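/- Let n be a positive integer and let k and l be integers with gcd(n, k, l) = 1 satisfying condition (B): n ∣ k+l or n ∣ 2k−l or n ∣ 2l−k. Then the image of a³ is central in the group E_n(k,l) with presentation (a, x : a^n, x a^k x a^{l−k} x a^{−l}), and consequently the cube of the shift automorphism of G_n(k,l) is the identity: θ³ = 1 in Aut(G_n(k,l)). -/

import Mathlib

namespace CPG

/-- The free group on generators `x_0, …, x_{n-1}` indexed by `ZMod n`. -/
abbrev FG (n : ℕ) := FreeGroup (ZMod n)

/-- The automorphism of the free group sending `x_j` to `x_{j+i}`. -/
def shiftA (n : ℕ) (i : ZMod n) : MulAut (FG n) :=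
  FreeGroup.freeGroupCongr (Equiv.addRight i)

/-- The shift automorphism `θ` of the free group, `x_j ↦ x_{j+1}`. -/
def shiftAut (n : ℕ) : MulAut (FG n) := shiftA n 1

/-- The `θ`-orbit of a word `w`: the relator set of the cyclic presentation `P_n(w)`. -/
def rels (n : ℕ) (w : FG n) : Set (FG n) := Set.range fun i : ZMod n => shiftA n i w

/-- The cyclically presented group `G_n(w)`. -/
abbrev Gp (n : ℕ) (w : FG n) := PresentedGroup (rels n w)

lemma shiftA_shiftA (n : ℕ) (i j : ZMod n) (x : FG n) :
    shiftA n i (shiftA n j x) = shiftA n (j + i) x := by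
  show FreeGroup.map _ (FreeGroup.map _ x) = FreeGroup.map _ x
  rw [FreeGroup.map.comp]
  have h : (⇑(Equiv.addRight i) ∘ ⇑(Equiv.addRight j)) = ⇑(Equiv.addRight (j + i)) := by
    funext z
    simp [add_assoc]
  rw [h]

lemma image_shiftAut_rels (n : ℕ) (w : FG n) :
    (shiftAut n) '' rels n w = rels n w := by
  ext r
  constructor
  · rintro ⟨s, ⟨i, rfl⟩, rfl⟩
    exact ⟨i + 1, (shiftA_shiftA n 1 i w).symm⟩
  · rintro ⟨i, rfl⟩
    refine ⟨shiftA n (i - 1) w, ⟨i - 1, rfl⟩, ?_⟩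
    rw [shiftAut, shiftA_shiftA, sub_add_cancel]

lemma map_normalClosure_rels (n : ℕ) (w : FG n) :
    (Subgroup.normalClosure (rels n w)).map (shiftAut n).toMonoidHom
      = Subgroup.normalClosure (rels n w) := by
  rw [Subgroup.map_normalClosure (rels n w) (shiftAut n).toMonoidHom (shiftAut n).surjective]
  congr 1
  exact image_shiftAut_rels n w

/-- The shift automorphism `θ` of the cyclically presented group `G_n(w)`. -/
def shiftG (n : ℕ) (w : FG n) : MulAut (Gp n w) :=
  QuotientGroup.congr (Subgroup.normalClosure (rels n w)) (Subgroup.normalClosure (rels n w))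
    (shiftAut n) (map_normalClosure_rels n w)

/-- The generator `x_k` (subscript mod `n`). -/
def xg (n : ℕ) (k : ℤ) : FG n := FreeGroup.of (k : ZMod n)

/-- The word `x_0 x_k x_l`. -/
def wkl (n : ℕ) (k l : ℤ) : FG n := xg n 0 * xg n k * xg n l

/-- The cyclically presented group `G_n(k,l) = G_n(x_0 x_k x_l)`. -/
abbrev Gkl (n : ℕ) (k l : ℤ) := Gp n (wkl n k l)

/-- The shift automorphism of `G_n(k,l)`. -/
def shiftKL (n : ℕ) (k l : ℤ) : MulAut (Gkl n k l) := shiftG n (wkl n k l)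

end CPG

namespace CPG

/-- The generator `a` of the free group on `{a, x}` (modeled on `Bool`, `a = of false`). -/
def ga : FreeGroup Bool := FreeGroup.of false

/-- The generator `x` of the free group on `{a, x}` (`x = of true`). -/
def gx : FreeGroup Bool := FreeGroup.of true

/-- The relator set of the presentation `(a, x : a^n, W)`. -/
def rels2 (n : ℕ) (W : FreeGroup Bool) : Set (FreeGroup Bool) := {ga ^ n, W}

/-- The group with presentation `(a, x : a^n, W)`. -/
abbrev E2 (n : ℕ) (W : FreeGroup Bool) := PresentedGroup (rels2 n W)

/-- The image of `a` in `(a, x : a^n, W)`. -/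
def a2 (n : ℕ) (W : FreeGroup Bool) : E2 n W := PresentedGroup.of false

/-- The image of `x` in `(a, x : a^n, W)`. -/
def x2 (n : ℕ) (W : FreeGroup Bool) : E2 n W := PresentedGroup.of true

/-- The relator set of `E_n(k,l) = (a, x : a^n, x a^k x a^(l-k) x a^(-l))`. -/
def relsE (n : ℕ) (k l : ℤ) : Set (FreeGroup Bool) :=
  {ga ^ n, gx * ga ^ k * gx * ga ^ (l - k) * gx * ga ^ (-l)}

/-- The group `E_n(k,l)` with presentation `(a, x : a^n, x a^k x a^(l-k) x a^(-l))`. -/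
abbrev Ekl (n : ℕ) (k l : ℤ) := PresentedGroup (relsE n k l)

/-- The image of `a` in `E_n(k,l)`. -/
def aE (n : ℕ) (k l : ℤ) : Ekl n k l := PresentedGroup.of false

/-- The image of `x` in `E_n(k,l)`. -/
def xE (n : ℕ) (k l : ℤ) : Ekl n k l := PresentedGroup.of true

end CPG



namespace CPG

private lemma solve_c {G : Type*} [Group G] {a b c : G} (h : a * b * c = 1) :
    c = b⁻¹ * a⁻¹ := by
  calc c = b⁻¹ * a⁻¹ * (a * b * c) := by group
  _ = b⁻¹ * a⁻¹ * 1 := by rw [h]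
  _ = b⁻¹ * a⁻¹ := by group

private lemma solve_b {G : Type*} [Group G] {a b c : G} (h : a * b * c = 1) :
    b = a⁻¹ * c⁻¹ := by
  calc b = a⁻¹ * (a * b * c) * c⁻¹ := by group
  _ = a⁻¹ * 1 * c⁻¹ := by rw [h]
  _ = a⁻¹ * c⁻¹ := by group

private lemma solve_a {G : Type*} [Group G] {a b c : G} (h : a * b * c = 1) :
    a = c⁻¹ * b⁻¹ := by
  calc a = (a * b * c) * c⁻¹ * b⁻¹ := by group
  _ = 1 * c⁻¹ * b⁻¹ := by rw [h]
  _ = c⁻¹ * b⁻¹ := by group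

private lemma iter_lemma {G : Type*} [Group G] (f : ℤ → G) (d : ℤ)
    (h : ∀ i, f (i + d) = f i) : ∀ (c : ℤ) (i : ℤ), f (i + d * c) = f i := by
  intro c
  induction c using Int.induction_on with
  | zero => intro i; simp
  | succ c ih =>
      intro i
      rw [show i + d * ((c : ℤ) + 1) = (i + d * (c : ℤ)) + d by ring, h, ih]
  | pred c ih =>
      intro i
      have hh := h (i + d * (-(c : ℤ) - 1))
      rw [show i + d * (-(c : ℤ) - 1) + d = i + d * (-(c : ℤ)) by ring] at hh
      rw [← hh]
      exact ih i

/-- The key combinatorial lemma: in any group, a periodic family satisfying the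
relations `f i * f (i+k) * f (i+l) = 1`, with condition (B) and `gcd(n,k,l) = 1`,
satisfies `f (i+3) = f i`. -/
private lemma key {G : Type*} [Group G] (n : ℕ) (k l : ℤ) (f : ℤ → G)
    (hper : ∀ (i t : ℤ), (n : ℤ) ∣ t → f (i + t) = f i)
    (hrel : ∀ i : ℤ, f i * f (i + k) * f (i + l) = 1)
    (hgcd : Int.gcd (n : ℤ) (Int.gcd k l) = 1)
    (hB : (n : ℤ) ∣ (k + l) ∨ (n : ℤ) ∣ (2 * k - l) ∨ (n : ℤ) ∣ (2 * l - k)) :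
    ∀ i : ℤ, f (i + 3) = f i := by
  have hgcd' : ∀ m : ℤ, ((Int.gcd (n : ℤ) m : ℤ) ∣ k) → ((Int.gcd (n : ℤ) m : ℤ) ∣ l) →
      IsCoprime (n : ℤ) m := by
    intro m hk hl
    rw [Int.isCoprime_iff_gcd_eq_one]
    have h1 : ((Int.gcd (n : ℤ) m : ℤ)) ∣ (Int.gcd k l : ℤ) := Int.dvd_coe_gcd hk hl
    have h2 : ((Int.gcd (n : ℤ) m : ℤ)) ∣ (Int.gcd (n : ℤ) (Int.gcd k l : ℤ) : ℤ) :=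
      Int.dvd_coe_gcd (Int.gcd_dvd_left _ _) h1
    rw [hgcd] at h2
    exact Nat.dvd_one.mp (by exact_mod_cast h2)
  obtain ⟨m, hcop, hm3⟩ : ∃ m : ℤ, IsCoprime (n : ℤ) m ∧ ∀ i : ℤ, f (i + 3 * m) = f i := by
    rcases hB with h | h | h
    · -- n ∣ k + l : relator becomes f i * f (i+k) * f (i-k) = 1
      have hR : ∀ i : ℤ, f i * f (i + k) * f (i - k) = 1 := by
        intro i
        have := hrel i
        rwa [show i + l = (i - k) + (k + l) by ring, hper (i - k) (k + l) h] at this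
      refine ⟨k, ?_, ?_⟩
      · -- gcd(n,k) divides l since n ∣ k+l
        apply hgcd' k (Int.gcd_dvd_right _ _)
        have h1 : ((Int.gcd (n : ℤ) k : ℤ)) ∣ (k + l) :=
          dvd_trans (Int.gcd_dvd_left _ _) h
        have h2 : ((Int.gcd (n : ℤ) k : ℤ)) ∣ k := Int.gcd_dvd_right _ _
        have := dvd_sub h1 h2
        rwa [add_sub_cancel_left] at this
      · -- f (i + 3k) = f i
        have step : ∀ i : ℤ, f (i + 2 * k) = f (i - k) := by
          intro i
          have h1 := hR i
          have h2 := hR (i + k)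
          rw [show i + k + k = i + 2 * k by ring, show i + k - k = i by ring] at h2
          have e1 : f (i - k) = (f (i + k))⁻¹ * (f i)⁻¹ := solve_c h1
          have e2 : f (i + 2 * k) = (f (i + k))⁻¹ * (f i)⁻¹ := solve_b h2
          rw [e1, e2]
        intro i
        have := step (i + k)
        rw [show i + k + 2 * k = i + 3 * k by ring, show i + k - k = i by ring] at this
        exact this
    · -- n ∣ 2k - l : relator becomes f i * f (i+k) * f (i+2k) = 1
      have hR : ∀ i : ℤ, f i * f (i + k) * f (i + 2 * k) = 1 := by
        intro i
        have := hrel i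
        rwa [show i + l = (i + 2 * k) + (l - 2 * k) by ring,
          hper (i + 2 * k) (l - 2 * k)
            (by rw [show l - 2 * k = -(2 * k - l) by ring]; exact dvd_neg.mpr h)] at this
      refine ⟨k, ?_, ?_⟩
      · apply hgcd' k (Int.gcd_dvd_right _ _)
        have h1 : ((Int.gcd (n : ℤ) k : ℤ)) ∣ (2 * k - l) :=
          dvd_trans (Int.gcd_dvd_left _ _) h
        have h2 : ((Int.gcd (n : ℤ) k : ℤ)) ∣ k := Int.gcd_dvd_right _ _
        have := dvd_sub (Dvd.dvd.mul_left h2 2) h1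
        rwa [show 2 * k - (2 * k - l) = l by ring] at this
      · intro i
        have h1 := hR i
        have h2 := hR (i + k)
        rw [show i + k + k = i + 2 * k by ring, show i + k + 2 * k = i + 3 * k by ring] at h2
        have e1 : f i = (f (i + 2 * k))⁻¹ * (f (i + k))⁻¹ := solve_a h1
        have e2 : f (i + 3 * k) = (f (i + 2 * k))⁻¹ * (f (i + k))⁻¹ := solve_c h2
        rw [e1, e2]
    · -- n ∣ 2l - k : relator becomes f i * f (i+2l) * f (i+l) = 1
      have hR : ∀ i : ℤ, f i * f (i + 2 * l) * f (i + l) = 1 := by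
        intro i
        have := hrel i
        rwa [show i + k = (i + 2 * l) + (k - 2 * l) by ring,
          hper (i + 2 * l) (k - 2 * l)
            (by rw [show k - 2 * l = -(2 * l - k) by ring]; exact dvd_neg.mpr h)] at this
      refine ⟨l, ?_, ?_⟩
      · refine hgcd' l ?_ (Int.gcd_dvd_right _ _)
        have h1 : ((Int.gcd (n : ℤ) l : ℤ)) ∣ (2 * l - k) :=
          dvd_trans (Int.gcd_dvd_left _ _) h
        have h2 : ((Int.gcd (n : ℤ) l : ℤ)) ∣ l := Int.gcd_dvd_right _ _
        have := dvd_sub (Dvd.dvd.mul_left h2 2) h1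
        rwa [show 2 * l - (2 * l - k) = k by ring] at this
      · intro i
        have h1 := hR i
        have h2 := hR (i + l)
        rw [show i + l + 2 * l = i + 3 * l by ring, show i + l + l = i + 2 * l by ring] at h2
        have e1 : f i = (f (i + l))⁻¹ * (f (i + 2 * l))⁻¹ := solve_a h1
        have e2 : f (i + 3 * l) = (f (i + l))⁻¹ * (f (i + 2 * l))⁻¹ := solve_b h2
        rw [e1, e2]
  -- now use coprimality
  obtain ⟨u, v, huv⟩ := hcop
  intro i
  have h1 : i + 3 = (i + (3 * m) * v) + (n : ℤ) * (3 * u) := by linear_combination (-3) * huv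
  rw [h1, hper _ _ ⟨3 * u, rfl⟩]
  exact iter_lemma f (3 * m) hm3 v i

end CPG

/-- Under condition (B) with `gcd(n,k,l) = 1`, the image of `a³` is central
in `E_n(k,l)` and the cube of the shift on `G_n(k,l)` is the identity. -/
theorem statement8 (n : ℕ) (hn : 0 < n) (k l : ℤ)
    (hgcd : Int.gcd (n : ℤ) (Int.gcd k l) = 1)
    (hB : (n : ℤ) ∣ (k + l) ∨ (n : ℤ) ∣ (2 * k - l) ∨ (n : ℤ) ∣ (2 * l - k)) :
    (CPG.aE n k l) ^ 3 ∈ Subgroup.center (CPG.Ekl n k l) ∧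
    (CPG.shiftKL n k l) ^ 3 = 1 := by
  constructor
  · -- a³ is central in E_n(k,l)
    set a := CPG.aE n k l with ha_def
    set x := CPG.xE n k l with hx_def
    have relone : ∀ r ∈ CPG.relsE n k l, (QuotientGroup.mk r : CPG.Ekl n k l) = 1 := by
      intro r hr
      exact (QuotientGroup.eq_one_iff r).mpr (Subgroup.subset_normalClosure hr)
    have hmk_a : (QuotientGroup.mk CPG.ga : CPG.Ekl n k l) = a := rfl
    have hmk_x : (QuotientGroup.mk CPG.gx : CPG.Ekl n k l) = x := rfl
    have ha : a ^ n = 1 := by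
      have := relone (CPG.ga ^ n) (Set.mem_insert _ _)
      rwa [show (QuotientGroup.mk (CPG.ga ^ n) : CPG.Ekl n k l)
        = (QuotientGroup.mk CPG.ga : CPG.Ekl n k l) ^ n from
          map_pow (QuotientGroup.mk' _) CPG.ga n, hmk_a] at this
    have hx : x * a ^ k * x * a ^ (l - k) * x * a ^ (-l) = 1 := by
      have := relone (CPG.gx * CPG.ga ^ k * CPG.gx * CPG.ga ^ (l - k) * CPG.gx * CPG.ga ^ (-l))
        (Set.mem_insert_of_mem _ rfl)
      have e : (QuotientGroup.mk' (Subgroup.normalClosure (CPG.relsE n k l)))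
          (CPG.gx * CPG.ga ^ k * CPG.gx * CPG.ga ^ (l - k) * CPG.gx * CPG.ga ^ (-l))
          = x * a ^ k * x * a ^ (l - k) * x * a ^ (-l) := by
        simp only [map_mul, map_zpow]
        rfl
      exact e.symm.trans this
    have haz : ∀ t : ℤ, (n : ℤ) ∣ t → a ^ t = 1 := by
      rintro t ⟨c, rfl⟩
      rw [zpow_mul, zpow_natCast, ha, one_zpow]
    set f : ℤ → CPG.Ekl n k l := fun i => a ^ i * x * a ^ (-i) with hf_def
    have hper : ∀ (i t : ℤ), (n : ℤ) ∣ t → f (i + t) = f i := by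
      intro i t ht
      have h1 : a ^ t = 1 := haz t ht
      have h2 : a ^ (-t) = 1 := by rw [zpow_neg, h1, inv_one]
      simp only [hf_def, neg_add, zpow_add, h1, h2, mul_one, one_mul]
    have hrel : ∀ i : ℤ, f i * f (i + k) * f (i + l) = 1 := by
      intro i
      have : f i * f (i + k) * f (i + l)
          = a ^ i * (x * a ^ k * x * a ^ (l - k) * x * a ^ (-l)) * a ^ (-i) := by
        simp only [hf_def]
        group
      rw [this, hx, mul_one, ← zpow_add, add_neg_cancel, zpow_zero]
    have hkey := CPG.key n k l f hper hrel hgcd hB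
    have h30 : a ^ (3 : ℤ) * x * a ^ (-3 : ℤ) = x := by
      have := hkey 0
      simpa [hf_def] using this
    have hcomm : Commute (a ^ 3) x := by
      have h3 : a ^ (3 : ℕ) = a ^ (3 : ℤ) := (zpow_natCast a 3).symm
      show a ^ 3 * x = x * a ^ 3
      rw [h3]
      calc a ^ (3 : ℤ) * x = (a ^ (3 : ℤ) * x * a ^ (-3 : ℤ)) * a ^ (3 : ℤ) := by group
        _ = x * a ^ (3 : ℤ) := by rw [h30]
    rw [Subgroup.mem_center_iff]
    intro g
    obtain ⟨w, rfl⟩ := QuotientGroup.mk_surjective g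
    have hcw : ∀ w : FreeGroup Bool, Commute (a ^ 3) (QuotientGroup.mk w : CPG.Ekl n k l) := by
      intro w
      induction w with
      | C1 => exact Commute.one_right _
      | of b =>
          cases b with
          | false => exact (Commute.refl a).pow_left 3
          | true => exact hcomm
      | inv_of b hb => exact hb.inv_right
      | mul u v hu hv => exact hu.mul_right hv
    exact ((hcw w).symm).eq
  · -- θ³ = 1
    set N := Subgroup.normalClosure (CPG.rels n (CPG.wkl n k l)) with hN_def
    have relone : ∀ r ∈ CPG.rels n (CPG.wkl n k l),
        (QuotientGroup.mk r : CPG.Gkl n k l) = 1 := by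
      intro r hr
      exact (QuotientGroup.eq_one_iff r).mpr (Subgroup.subset_normalClosure hr)
    set f : ℤ → CPG.Gkl n k l :=
      fun i => QuotientGroup.mk (FreeGroup.of ((i : ZMod n))) with hf_def
    have hper : ∀ (i t : ℤ), (n : ℤ) ∣ t → f (i + t) = f i := by
      intro i t ht
      have : ((i + t : ℤ) : ZMod n) = ((i : ℤ) : ZMod n) := by
        push_cast
        rw [(ZMod.intCast_zmod_eq_zero_iff_dvd t n).mpr ht, add_zero]
      simp only [hf_def, this]
      rfl
    have hrel : ∀ i : ℤ, f i * f (i + k) * f (i + l) = 1 := by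
      intro i
      have hmem : CPG.shiftA n (i : ZMod n) (CPG.wkl n k l) ∈ CPG.rels n (CPG.wkl n k l) :=
        ⟨(i : ZMod n), rfl⟩
      have h1 := relone _ hmem
      have hexp : CPG.shiftA n (i : ZMod n) (CPG.wkl n k l)
          = FreeGroup.of ((i : ZMod n)) * FreeGroup.of (((i + k : ℤ) : ZMod n))
            * FreeGroup.of (((i + l : ℤ) : ZMod n)) := by
        simp only [CPG.shiftA, CPG.wkl, CPG.xg, FreeGroup.freeGroupCongr_apply, map_mul,
          FreeGroup.map.of, Equiv.coe_addRight]
        push_cast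
        ring_nf
      rw [hexp] at h1
      exact h1
    have hkey := CPG.key n k l f hper hrel hgcd hB
    have hgen : ∀ j : ZMod n,
        (QuotientGroup.mk (FreeGroup.of (j + 3)) : CPG.Gkl n k l)
          = QuotientGroup.mk (FreeGroup.of j) := by
      intro j
      obtain ⟨i, rfl⟩ := ZMod.intCast_surjective j
      have := hkey i
      have hc : ((i + 3 : ℤ) : ZMod n) = ((i : ℤ) : ZMod n) + 3 := by push_cast; ring
      simp only [hf_def, hc] at this
      exact this
    -- the hom mk ∘ shiftA n 3 equals mk
    have hA3 : ∀ w : CPG.FG n,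
        (QuotientGroup.mk (CPG.shiftA n 3 w) : CPG.Gkl n k l) = QuotientGroup.mk w := by
      have heq : (QuotientGroup.mk' N).comp (CPG.shiftA n 3).toMonoidHom
          = QuotientGroup.mk' N := by
        apply FreeGroup.ext_hom
        intro j
        show (QuotientGroup.mk (CPG.shiftA n 3 (FreeGroup.of j)) : CPG.Gkl n k l)
          = QuotientGroup.mk (FreeGroup.of j)
        have : CPG.shiftA n 3 (FreeGroup.of j) = FreeGroup.of (j + 3) := by
          simp [CPG.shiftA, FreeGroup.freeGroupCongr_apply, FreeGroup.map.of]
        rw [this]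
        exact hgen j
      intro w
      exact DFunLike.congr_fun heq w
    apply MulEquiv.ext
    intro g
    obtain ⟨w, rfl⟩ := QuotientGroup.mk_surjective g
    have happ : ∀ u : CPG.FG n,
        CPG.shiftKL n k l (QuotientGroup.mk u) = QuotientGroup.mk (CPG.shiftAut n u) := by
      intro u
      rfl
    have hpow : (CPG.shiftKL n k l ^ 3) (QuotientGroup.mk w)
        = CPG.shiftKL n k l (CPG.shiftKL n k l (CPG.shiftKL n k l (QuotientGroup.mk w))) := by
      rw [pow_succ, pow_succ, pow_one]
      rfl
    rw [hpow, happ, happ, happ]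
    have hcomp : CPG.shiftAut n (CPG.shiftAut n (CPG.shiftAut n w)) = CPG.shiftA n 3 w := by
      show CPG.shiftA n 1 (CPG.shiftA n 1 (CPG.shiftA n 1 w)) = CPG.shiftA n 3 w
      rw [CPG.shiftA_shiftA, CPG.shiftA_shiftA]
      norm_num
    rw [hcomp, hA3 w]
    rfl
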